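/- Let f : ℝ → (0,∞) be continuous, 1-periodic, even, differentiable on (0,1), and suppose there exist constants C > 0 and ε > 0 with f(t) ≤ f(0) − Ct for all 0 ≤ t < ε. Let X = {x^0,…,x^{N−1}} ⊆ 𝕋^d be an N-point configuration such that x^0_1 = x^1_1 = … = x^j_1 for some j ≥ 1 and x^k_1 ≠ x^0_1 for all k > j. For r ∈ [−1/2, 1/2) let X_r be the configuration obtained by replacing x^0 with (x^0_1 + r, x^0_2, …, x^0_d). Then the function r ↦ E_F(X_r) does not have a local minimum at r = 0. -/

import Mathlib

open Finset Real

/-- Tensor product energy of `N` points in `𝕋^d ≃ [0,1)^d`: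
`E_F(X) = Σ_{k ≠ ℓ} ∏_i f(x_i^k − x_i^ℓ)`. -/
noncomputable def energyProd {N d : ℕ} (f : ℝ → ℝ) (x : Fin N → Fin d → ℝ) : ℝ :=
  ∑ k : Fin N, ∑ ℓ : Fin N, if k = ℓ then 0 else ∏ i : Fin d, f (x k i - x ℓ i)

/-- Perturbation argument: if `f` is a continuous, 1-periodic, even, positive
potential, differentiable on `(0,1)` and with a sharp kink at the origin
(`f(t) ≤ f(0) − Ct` for small `t ≥ 0`), and if in the configuration `X` the
points `x^0,…,x^j` (`j ≥ 1`) share their first coordinate while no further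
point does, then moving the first coordinate of `x^0` by `r`, the resulting
energy `r ↦ E_F(X_r)` does not have a local minimum at `r = 0`. -/
theorem energy_not_localMin_of_shared_coordinate (N d : ℕ)
    (hN : 0 < N) (hd : 0 < d) (f : ℝ → ℝ)
    (hf_cont : Continuous f)
    (hf_per : Function.Periodic f 1)
    (hf_even : ∀ t, f t = f (1 - t))
    (hf_pos : ∀ t, 0 < f t)
    (hf_diff : DifferentiableOn ℝ f (Set.Ioo 0 1))
    (C ε : ℝ) (hC : 0 < C) (hε : 0 < ε)
    (hf_kink : ∀ t : ℝ, 0 ≤ t → t < ε → f t ≤ f 0 - C * t)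
    (x : Fin N → Fin d → ℝ) (hx : ∀ k i, x k i ∈ Set.Ico (0 : ℝ) 1)
    (j : ℕ) (hj1 : 1 ≤ j) (hjN : j < N)
    (hsame : ∀ k : Fin N, (k : ℕ) ≤ j → x k ⟨0, hd⟩ = x ⟨0, hN⟩ ⟨0, hd⟩)
    (hdiffc : ∀ k : Fin N, j < (k : ℕ) → x k ⟨0, hd⟩ ≠ x ⟨0, hN⟩ ⟨0, hd⟩) :
    ¬ IsLocalMin (fun r : ℝ =>
        energyProd f (Function.update x ⟨0, hN⟩
          (Function.update (x ⟨0, hN⟩) ⟨0, hd⟩ (x ⟨0, hN⟩ ⟨0, hd⟩ + r)))) 0 := by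
  intro hmin
  set z : Fin N := ⟨0, hN⟩ with hz
  set i0 : Fin d := ⟨0, hd⟩ with hi0
  -- f is even
  have hfneg : ∀ t : ℝ, f (-t) = f t := by
    intro t
    rw [hf_even (-t)]
    have h1 : (1 : ℝ) - -t = t + 1 := by ring
    rw [h1, hf_per t]
  -- f differentiable at noninteger points of (-1,1)
  have hdiffAt : ∀ b : ℝ, -1 < b → b < 1 → b ≠ 0 → DifferentiableAt ℝ f b := by
    intro b h1 h2 h3
    rcases h3.lt_or_gt with h | h
    · have key : DifferentiableAt ℝ (fun t => f (t + 1)) b :=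
        DifferentiableAt.comp b
          (hf_diff.differentiableAt (isOpen_Ioo.mem_nhds ⟨by linarith, by linarith⟩))
          (differentiableAt_id.add_const 1)
      have he : (fun t : ℝ => f (t + 1)) = f := funext fun t => hf_per t
      rwa [he] at key
    · exact hf_diff.differentiableAt (isOpen_Ioo.mem_nhds ⟨h, h2⟩)
  set Q : Fin N → ℝ := fun ℓ => ∏ i ∈ univ.erase i0, f (x z i - x ℓ i) with hQ
  set a : Fin N → ℝ := fun ℓ => x z i0 - x ℓ i0 with ha
  set ψ : ℝ → ℝ := fun r => ∑ ℓ ∈ univ.erase z, Q ℓ * f (a ℓ + r) with hψdef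
  set c : ℝ := ∑ k ∈ univ.erase z, ∑ ℓ ∈ univ.erase z,
      (if k = ℓ then (0:ℝ) else ∏ i, f (x k i - x ℓ i)) with hc
  -- main identity
  have hE : ∀ r : ℝ,
      energyProd f (Function.update x z (Function.update (x z) i0 (x z i0 + r)))
        = c + 2 * ψ r := by
    intro r
    set y := Function.update x z (Function.update (x z) i0 (x z i0 + r)) with hy
    have hyz0 : y z i0 = x z i0 + r := by
      simp [hy, Function.update_self]
    have hyzi : ∀ i, i ≠ i0 → y z i = x z i := by
      intro i hi
      simp [hy, Function.update_self, Function.update_of_ne hi]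
    have hyk : ∀ k, k ≠ z → ∀ i, y k i = x k i := by
      intro k hk i
      simp [hy, Function.update_of_ne hk]
    have hTz : ∀ ℓ, ℓ ≠ z → (∏ i, f (y z i - y ℓ i)) = Q ℓ * f (a ℓ + r) := by
      intro ℓ hℓ
      rw [← Finset.mul_prod_erase univ (fun i => f (y z i - y ℓ i)) (mem_univ i0)]
      have h2 : ∏ i ∈ univ.erase i0, f (y z i - y ℓ i) = Q ℓ :=
        Finset.prod_congr rfl fun i hi => by
          rw [hyzi i (Finset.ne_of_mem_erase hi), hyk ℓ hℓ i]
      rw [hyz0, hyk ℓ hℓ i0, h2]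
      have h1 : x z i0 + r - x ℓ i0 = a ℓ + r := by rw [ha]; ring
      rw [h1, mul_comm]
    have hTk : ∀ k, k ≠ z → (∏ i, f (y k i - y z i)) = Q k * f (a k + r) := by
      intro k hk
      rw [← Finset.mul_prod_erase univ (fun i => f (y k i - y z i)) (mem_univ i0)]
      have h2 : ∏ i ∈ univ.erase i0, f (y k i - y z i) = Q k :=
        Finset.prod_congr rfl fun i hi => by
          rw [hyzi i (Finset.ne_of_mem_erase hi), hyk k hk i]
          rw [show x k i - x z i = -(x z i - x k i) by ring, hfneg]
      rw [hyz0, hyk k hk i0, h2]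
      have h1 : x k i0 - (x z i0 + r) = -(a k + r) := by rw [ha]; ring
      rw [h1, hfneg, mul_comm]
    have Fz : (∑ ℓ : Fin N, if z = ℓ then (0:ℝ) else ∏ i, f (y z i - y ℓ i)) = ψ r := by
      rw [← Finset.add_sum_erase univ _ (mem_univ z), if_pos rfl, zero_add, hψdef]
      exact Finset.sum_congr rfl fun ℓ hℓ => by
        rw [if_neg (Ne.symm (Finset.ne_of_mem_erase hℓ)), hTz ℓ (Finset.ne_of_mem_erase hℓ)]
    have Fk : ∀ k, k ≠ z → (∑ ℓ : Fin N, if k = ℓ then (0:ℝ) else ∏ i, f (y k i - y ℓ i))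
        = Q k * f (a k + r)
          + ∑ ℓ ∈ univ.erase z, (if k = ℓ then (0:ℝ) else ∏ i, f (x k i - x ℓ i)) := by
      intro k hk
      rw [← Finset.add_sum_erase univ _ (mem_univ z), if_neg hk, hTk k hk]
      congr 1
      exact Finset.sum_congr rfl fun ℓ hℓ => by
        by_cases hkl : k = ℓ
        · simp [hkl]
        · rw [if_neg hkl, if_neg hkl]
          exact Finset.prod_congr rfl fun i _ => by
            rw [hyk k hk i, hyk ℓ (Finset.ne_of_mem_erase hℓ) i]
    rw [energyProd]
    rw [← Finset.add_sum_erase univ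
      (fun k => ∑ ℓ : Fin N, if k = ℓ then (0:ℝ) else ∏ i, f (y k i - y ℓ i)) (mem_univ z)]
    rw [Fz]
    rw [Finset.sum_congr rfl (fun k hk => Fk k (Finset.ne_of_mem_erase hk)),
      Finset.sum_add_distrib]
    have : (∑ k ∈ univ.erase z, Q k * f (a k + r)) = ψ r := rfl
    rw [this, ← hc, hψdef]
    ring
  -- local min transfers to ψ
  have hψmin : ∀ᶠ r in nhds (0:ℝ), ψ 0 ≤ ψ r := by
    have hmin' : ∀ᶠ r in nhds (0:ℝ),
        energyProd f (Function.update x z (Function.update (x z) i0 (x z i0 + 0)))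
          ≤ energyProd f (Function.update x z (Function.update (x z) i0 (x z i0 + r))) := hmin
    filter_upwards [hmin'] with r hr
    rw [hE r, hE 0] at hr
    linarith
  -- split ψ into shared part and rest
  have hQpos : ∀ ℓ, 0 < Q ℓ := fun ℓ => Finset.prod_pos fun i _ => hf_pos _
  set J := (univ.erase z).filter (fun ℓ : Fin N => (ℓ:ℕ) ≤ j) with hJ
  set L := (univ.erase z).filter (fun ℓ : Fin N => ¬ (ℓ:ℕ) ≤ j) with hL
  set S := ∑ ℓ ∈ J, Q ℓ with hS
  set g : ℝ → ℝ := fun r => ∑ ℓ ∈ L, Q ℓ * f (a ℓ + r) with hg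
  have hsplit : ∀ r, ψ r = S * f r + g r := by
    intro r
    show (∑ ℓ ∈ univ.erase z, Q ℓ * f (a ℓ + r)) = S * f r + g r
    rw [← Finset.sum_filter_add_sum_filter_not (univ.erase z) (fun ℓ : Fin N => (ℓ:ℕ) ≤ j)]
    congr 1
    · rw [hS, hJ, Finset.sum_mul]
      refine Finset.sum_congr rfl fun ℓ hℓ => ?_
      rw [Finset.mem_filter] at hℓ
      have haz : a ℓ = 0 := by
        show x z i0 - x ℓ i0 = 0
        rw [hsame ℓ hℓ.2]; ring
      rw [haz, zero_add]
  have hSpos : 0 < S := by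
    apply Finset.sum_pos (fun ℓ _ => hQpos ℓ)
    refine ⟨⟨1, lt_of_le_of_lt hj1 hjN⟩, ?_⟩
    rw [hJ, Finset.mem_filter, Finset.mem_erase]
    refine ⟨⟨?_, mem_univ _⟩, hj1⟩
    intro hcon
    have hval := congrArg Fin.val hcon
    simp [hz] at hval
  -- derivative of g at 0
  have hLbounds : ∀ ℓ ∈ L, -1 < a ℓ ∧ a ℓ < 1 ∧ a ℓ ≠ 0 := by
    intro ℓ hℓ
    rw [hL, Finset.mem_filter] at hℓ
    have h1 := hx z i0
    have h2 := hx ℓ i0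
    rw [Set.mem_Ico] at h1 h2
    have hne := hdiffc ℓ (by omega)
    refine ⟨?_, ?_, ?_⟩
    · show -1 < x z i0 - x ℓ i0
      linarith
    · show x z i0 - x ℓ i0 < 1
      linarith
    · show x z i0 - x ℓ i0 ≠ 0
      exact sub_ne_zero.mpr (Ne.symm hne)
  set D := ∑ ℓ ∈ L, Q ℓ * deriv f (a ℓ) with hD
  have hgderiv : HasDerivAt g D 0 := by
    rw [hg, hD]
    apply HasDerivAt.fun_sum
    intro ℓ hℓ
    obtain ⟨hb1, hb2, hb3⟩ := hLbounds ℓ hℓ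
    have hdf := hdiffAt (a ℓ) hb1 hb2 hb3
    have h0 : HasDerivAt (fun r : ℝ => a ℓ + r) 1 0 := by
      simpa using (hasDerivAt_id (0:ℝ)).const_add (a ℓ)
    have hg2 : HasDerivAt f (deriv f (a ℓ)) (a ℓ + 0) := by
      rw [add_zero]; exact hdf.hasDerivAt
    have hcomp := hg2.comp 0 h0
    simpa using hcomp.const_mul (Q ℓ)
  -- little-o bound
  have hlo := hasDerivAt_iff_isLittleO.mp hgderiv
  have hbound := hlo.def (show (0:ℝ) < S*C/2 by positivity)
  have hev3 : ∀ᶠ r : ℝ in nhds 0, |r| < ε := by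
    have := eventually_abs_sub_lt (0:ℝ) hε
    simpa using this
  have hcomb := (hψmin.and (hbound.and hev3))
  rw [Metric.eventually_nhds_iff] at hcomb
  obtain ⟨δ, hδ, hδall⟩ := hcomb
  set r : ℝ := if D < 0 then δ/2 else -(δ/2) with hr
  have hrabs : |r| = δ/2 := by
    rcases lt_or_ge D 0 with hD0 | hD0
    · rw [hr, if_pos hD0, abs_of_pos (half_pos hδ)]
    · rw [hr, if_neg (not_lt.mpr hD0), abs_neg, abs_of_pos (half_pos hδ)]
  have hrdist : dist r 0 < δ := by
    rw [Real.dist_eq, sub_zero, hrabs]; linarith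
  obtain ⟨hψle, hb, hεr⟩ := hδall hrdist
  -- kink bound: f r - f 0 ≤ -C * |r|
  have hkink : f r ≤ f 0 - C * |r| := by
    rcases le_or_gt 0 r with hr0 | hr0
    · have h2 := hf_kink r hr0 (by have := hεr; rwa [abs_of_nonneg hr0] at this)
      rw [abs_of_nonneg hr0]; linarith
    · have h2 := hf_kink (-r) (by linarith) (by have := hεr; rwa [abs_of_neg hr0] at this)
      rw [abs_of_neg hr0, ← hfneg r]
      linarith
  -- derivative bound
  have hb' : |g r - g 0 - r * D| ≤ S*C/2 * |r| := by
    have : ‖g r - g 0 - (r - 0) • D‖ ≤ S*C/2 * ‖r - 0‖ := hb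
    simpa [Real.norm_eq_abs, smul_eq_mul] using this
  have hrD : r * D ≤ 0 := by
    rw [hr]
    split_ifs with hD0
    · exact mul_nonpos_of_nonneg_of_nonpos (by linarith) (le_of_lt hD0)
    · push_neg at hD0
      exact mul_nonpos_of_nonpos_of_nonneg (by linarith) hD0
  have hgr : g r - g 0 ≤ r * D + S*C/2 * |r| := by
    have := abs_le.mp hb'
    linarith [this.2]
  have hrpos : 0 < |r| := by rw [hrabs]; linarith
  have hψr : ψ r < ψ 0 := by
    rw [hsplit r, hsplit 0]
    have hfr : S * f r ≤ S * (f 0 - C * |r|) :=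
      mul_le_mul_of_nonneg_left hkink (le_of_lt hSpos)
    nlinarith [mul_pos (mul_pos hSpos hC) hrpos]
  linarith [hψle, hψr]
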